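/- arXiv:1912.02127 — 7 statements merged into one kernel-verified Lean document; each statement's English description precedes it below -/
import Mathlib

section
/- For every RDF graph schema S^R, the output SM₁(S^R) of the schema mapping SM₁ is a well-formed property graph schema: its sets of node types, edge types and property types are finite, the functions Θ, Π, Φ are total on their domains, and the partial function Ψ assigns to each node type in its domain a non-empty set of property types such that Ψ(o₁) ∩ Ψ(o₂) = ∅ for distinct o₁, o₂ in its domain. -/
/-! Formalization of RDF databases, Property Graph databases, and the
database mappings DM₁ = (SM₁, IM₁) and DM₂ = (SM₂, IM₂) from
"Mapping RDF Databases to Property Graph Databases". -/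

/-- The ambient context: the sets I (IRIs), L (literals), 𝕃 (labels),
𝕍 (values), 𝕋 (datatypes), the datatype IRIs I_DT, the reserved vocabulary
I_V, the inclusions I ⊆ 𝕃, I ⊆ 𝕍, L ⊆ 𝕍 (with retractions), the
distinguished labels, the datatype `String`, the typing function on values,
and the bijection f : I_DT → 𝕋 with inverse f⁻¹. -/
structure Ctx : Type 1 where
  Iri : Type
  Lit : Type
  Lbl : Type
  Val : Type
  DT : Type
  infIri : Infinite Iri
  infLit : Infinite Lit
  infLbl : Infinite Lbl
  infVal : Infinite Val
  finDT : Finite DT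
  IDT : Set Iri
  IV : Set Iri
  iLbl : Iri → Lbl
  iLbl_inj : Function.Injective iLbl
  lblIri : Lbl → Iri
  lblIri_iLbl : ∀ i, lblIri (iLbl i) = i
  iVal : Iri → Val
  iVal_inj : Function.Injective iVal
  valIri : Val → Iri
  valIri_iVal : ∀ i, valIri (iVal i) = i
  lVal : Lit → Val
  lVal_inj : Function.Injective lVal
  valLit : Val → Lit
  valLit_lVal : ∀ l, valLit (lVal l) = l
  iriLbl : Lbl
  typeLbl : Lbl
  valueLbl : Lbl
  resLbl : Lbl
  litLbl : Lbl
  objLbl : Lbl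
  dtpLbl : Lbl
  iri_ne_type : iriLbl ≠ typeLbl
  iri_ne_value : iriLbl ≠ valueLbl
  type_ne_value : typeLbl ≠ valueLbl
  res_ne_lit : resLbl ≠ litLbl
  obj_ne_dtp : objLbl ≠ dtpLbl
  stringDT : DT
  typeOf : Val → DT
  f : {i : Iri // i ∈ IDT} → DT
  f_bij : Function.Bijective f
  finv : DT → Iri
  finv_mem : ∀ t, finv t ∈ IDT
  f_finv : ∀ t, f ⟨finv t, finv_mem t⟩ = t
  finv_f : ∀ (i : Iri) (h : i ∈ IDT), finv (f ⟨i, h⟩) = i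

/-- An RDF graph: resource nodes `NI`, literal nodes `NL` (disjoint from `NI`
since they are distinct types), object-property edges `EO`, datatype-property
edges `ED` (disjoint), with `aI`/`aL` the IRI/literal assignments, `bO`/`bD`
the incidence functions, and `dI`, `dL`, `dO`, `dD` the components of the
total class-labeling function δ on the disjoint union NI ∪ NL ∪ EO ∪ ED. -/
structure RDFGraph (C : Ctx) : Type 1 where
  NI : Type
  NL : Type
  EO : Type
  ED : Type
  aI : NI → C.Iri
  aL : NL → C.Lit
  bO : EO → NI × NI
  bD : ED → NI × NL
  dI : NI → C.Iri
  dL : NL → C.Iri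
  dO : EO → C.Iri
  dD : ED → C.Iri

/-- Well-formedness of an RDF graph: finite node and edge sets and
injective α_I and α_L (totality and disjointness are built in). -/
def RDFGraph.WF {C : Ctx} (G : RDFGraph C) : Prop :=
  Finite G.NI ∧ Finite G.NL ∧ Finite G.EO ∧ Finite G.ED ∧
    Function.Injective G.aI ∧ Function.Injective G.aL

/-- An RDF graph schema: resource classes `NS`, property classes `ES`,
the class-IRI assignment φ (components `phiN`, `phiE`) and
ϕ(pc) = (dom pc, rng pc). -/
structure RDFSchema (C : Ctx) : Type 1 where
  NS : Type
  ES : Type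
  phiN : NS → C.Iri
  phiE : ES → C.Iri
  dom : ES → NS
  rng : ES → NS

/-- Well-formedness of an RDF graph schema: finiteness, injectivity of φ on
NS ∪ ES, and φ avoiding the reserved vocabulary I_V. -/
def RDFSchema.WF {C : Ctx} (S : RDFSchema C) : Prop :=
  Finite S.NS ∧ Finite S.ES ∧
    Function.Injective (Sum.elim S.phiN S.phiE) ∧
    (∀ x : S.NS ⊕ S.ES, Sum.elim S.phiN S.phiE x ∉ C.IV)

/-- Validity of an RDF graph w.r.t. an RDF graph schema (G^R ⊨ S^R). -/
def RDFValid (C : Ctx) (G : RDFGraph C) (S : RDFSchema C) : Prop :=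
  (∀ r : G.NI, ∃ rc : S.NS, G.dI r = S.phiN rc) ∧
  (∀ l : G.NL, ∃ rc : S.NS, G.dL l = S.phiN rc) ∧
  (∀ e : G.EO, ∃ pc : S.ES, G.dO e = S.phiE pc ∧
      G.dI (G.bO e).1 = S.phiN (S.dom pc) ∧ G.dI (G.bO e).2 = S.phiN (S.rng pc)) ∧
  (∀ e : G.ED, ∃ pc : S.ES, G.dD e = S.phiE pc ∧
      G.dI (G.bD e).1 = S.phiN (S.dom pc) ∧ G.dL (G.bD e).2 = S.phiN (S.rng pc))

/-- A property graph: nodes `N`, edges `E`, properties `P` (mutually disjoint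
since distinct types), label function Γ (`lab`), property assignment Υ (`pv`),
incidence Σ (`ends`), and the partial function Δ (`props`), encoded as a
set-valued function whose domain is `{o | (props o).Nonempty}`. -/
structure PG (C : Ctx) : Type 1 where
  N : Type
  E : Type
  P : Type
  lab : N ⊕ E → C.Lbl
  pv : P → C.Lbl × C.Val
  ends : E → N × N
  props : N ⊕ E → Set P

/-- Well-formedness of a property graph: finite (mutually disjoint) sets of
nodes, edges and properties; Γ, Υ, Σ total (built in); Δ partial into
non-empty sets (built into the encoding) with pairwise disjoint values. -/
def PG.WF {C : Ctx} (G : PG C) : Prop :=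
  Finite G.N ∧ Finite G.E ∧ Finite G.P ∧
    ∀ o₁ o₂ : G.N ⊕ G.E, o₁ ≠ o₂ → Disjoint (G.props o₁) (G.props o₂)

/-- A property graph schema. -/
structure PGSchema (C : Ctx) : Type 1 where
  NT : Type
  ET : Type
  PT : Type
  tlab : NT ⊕ ET → C.Lbl
  tpv : PT → C.Lbl × C.DT
  tends : ET → NT × NT
  tprops : NT ⊕ ET → Set PT

/-- Well-formedness of a property graph schema. -/
def PGSchema.WF {C : Ctx} (S : PGSchema C) : Prop :=
  Finite S.NT ∧ Finite S.ET ∧ Finite S.PT ∧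
    ∀ o₁ o₂ : S.NT ⊕ S.ET, o₁ ≠ o₂ → Disjoint (S.tprops o₁) (S.tprops o₂)

/-- Validity of a property graph w.r.t. a property graph schema (G^P ⊨ S^P). -/
def PGValid (C : Ctx) (G : PG C) (S : PGSchema C) : Prop :=
  (∀ n : G.N, ∃ nt : S.NT,
    G.lab (Sum.inl n) = S.tlab (Sum.inl nt) ∧
    ∀ p ∈ G.props (Sum.inl n), ∃ pt ∈ S.tprops (Sum.inl nt),
      S.tpv pt = ((G.pv p).1, C.typeOf (G.pv p).2)) ∧
  (∀ e : G.E, ∃ (et : S.ET) (nt nt' : S.NT),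
    S.tends et = (nt, nt') ∧
    G.lab (Sum.inr e) = S.tlab (Sum.inr et) ∧
    G.lab (Sum.inl (G.ends e).1) = S.tlab (Sum.inl nt) ∧
    G.lab (Sum.inl (G.ends e).2) = S.tlab (Sum.inl nt') ∧
    ∀ p ∈ G.props (Sum.inr e), ∃ pt ∈ S.tprops (Sum.inr et),
      S.tpv pt = ((G.pv p).1, C.typeOf (G.pv p).2))

/-- The schema mapping SM₁: a node type for each resource class not in I_DT
(each carrying the property type ('iri', String)); for each property class pc
with ϕ(pc) = (rc₁, rc₂): if φ(rc₂) ∈ I_DT, a property type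
(φ(pc), f(φ(rc₂))) attached to nt_{rc₁}; otherwise an edge type labeled φ(pc)
from nt_{rc₁} to nt_{rc₂}. -/
def SM1 (C : Ctx) (S : RDFSchema C) : PGSchema C where
  NT := {rc : S.NS // S.phiN rc ∉ C.IDT}
  ET := {pc : S.ES // S.phiN (S.dom pc) ∉ C.IDT ∧ S.phiN (S.rng pc) ∉ C.IDT}
  PT := {rc : S.NS // S.phiN rc ∉ C.IDT} ⊕
        {pc : S.ES // S.phiN (S.dom pc) ∉ C.IDT ∧ S.phiN (S.rng pc) ∈ C.IDT}
  tlab := Sum.elim (fun nt => C.iLbl (S.phiN nt.1)) (fun et => C.iLbl (S.phiE et.1))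
  tpv := Sum.elim (fun _ => (C.iriLbl, C.stringDT))
    (fun pc => (C.iLbl (S.phiE pc.1), C.f ⟨S.phiN (S.rng pc.1), pc.2.2⟩))
  tends := fun et => (⟨S.dom et.1, et.2.1⟩, ⟨S.rng et.1, et.2.2⟩)
  tprops := Sum.elim
    (fun nt => {pt | match pt with
                     | Sum.inl nt' => nt' = nt
                     | Sum.inr pc => S.dom pc.1 = nt.1})
    (fun _ => ∅)

/-- The instance mapping IM₁: a node n_r (labeled δ(r), carrying the property
('iri', α_I(r))) for each resource node r; a property (δ(dp), α_L(r₂)) on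
n_{r₁} for each datatype-property edge dp with β_D(dp) = (r₁, r₂); an edge
(labeled δ(op), from n_{r₁} to n_{r₂}) for each object-property edge op. -/
def IM1 (C : Ctx) (G : RDFGraph C) : PG C where
  N := G.NI
  E := G.EO
  P := G.NI ⊕ G.ED
  lab := Sum.elim (fun r => C.iLbl (G.dI r)) (fun op => C.iLbl (G.dO op))
  pv := Sum.elim (fun r => (C.iriLbl, C.iVal (G.aI r)))
    (fun dp => (C.iLbl (G.dD dp), C.lVal (G.aL (G.bD dp).2)))
  ends := G.bO
  props := Sum.elim
    (fun n => {p | match p with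
                   | Sum.inl r => r = n
                   | Sum.inr dp => (G.bD dp).1 = n})
    (fun _ => ∅)

/-- The inverse schema mapping SM₁⁻¹. -/
def SM1inv (C : Ctx) (T : PGSchema C) : RDFSchema C where
  NS := {dt : C.DT // ∃ pt : T.PT, (T.tpv pt).1 ≠ C.iriLbl ∧ (T.tpv pt).2 = dt} ⊕ T.NT
  ES := T.ET ⊕ {x : T.NT × T.PT // x.2 ∈ T.tprops (Sum.inl x.1) ∧ (T.tpv x.2).1 ≠ C.iriLbl}
  phiN := Sum.elim (fun dt => C.finv dt.1) (fun nt => C.lblIri (T.tlab (Sum.inl nt)))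
  phiE := Sum.elim (fun et => C.lblIri (T.tlab (Sum.inr et)))
    (fun x => C.lblIri (T.tpv x.1.2).1)
  dom := Sum.elim (fun et => Sum.inr (T.tends et).1) (fun x => Sum.inr x.1.1)
  rng := Sum.elim (fun et => Sum.inr (T.tends et).2)
    (fun x => Sum.inl ⟨(T.tpv x.1.2).2, ⟨x.1.2, x.2.2, rfl⟩⟩)

/-- The (unique, when it exists) value of the property with label `lab`
attached to the object `o`; chosen classically. -/
noncomputable def propVal (C : Ctx) (G : PG C) (o : G.N ⊕ G.E) (lab : C.Lbl) : C.Val :=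
  haveI : Nonempty C.Val := @Infinite.nonempty _ C.infVal
  Classical.epsilon (fun v => ∃ p ∈ G.props o, G.pv p = (lab, v))

/-- The inverse instance mapping IM₁⁻¹. -/
noncomputable def IM1inv (C : Ctx) (G : PG C) : RDFGraph C where
  NI := G.N
  NL := {v : C.Val // ∃ n : G.N, ∃ p ∈ G.props (Sum.inl n),
          (G.pv p).1 ≠ C.iriLbl ∧ (G.pv p).2 = v}
  EO := G.E
  ED := {x : G.N × G.P // x.2 ∈ G.props (Sum.inl x.1) ∧ (G.pv x.2).1 ≠ C.iriLbl}
  aI := fun n => C.valIri (propVal C G (Sum.inl n) C.iriLbl)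
  aL := fun v => C.valLit v.1
  bO := G.ends
  bD := fun x => (x.1.1, ⟨(G.pv x.1.2).2, ⟨x.1.1, x.1.2, x.2.1, x.2.2, rfl⟩⟩)
  dI := fun n => C.lblIri (G.lab (Sum.inl n))
  dL := fun v => C.finv (C.typeOf v.1)
  dO := fun e => C.lblIri (G.lab (Sum.inr e))
  dD := fun x => C.lblIri (G.pv x.1.2).1

/-- The instance mapping IM₂ (schema-independent). -/
def IM2 (C : Ctx) (G : RDFGraph C) : PG C where
  N := G.NI ⊕ G.NL
  E := G.EO ⊕ G.ED
  P := ((G.NI ⊕ G.NL) × Bool) ⊕ (G.EO ⊕ G.ED)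
  lab := Sum.elim
    (Sum.elim (fun _ => C.resLbl) (fun _ => C.litLbl))
    (Sum.elim (fun _ => C.objLbl) (fun _ => C.dtpLbl))
  pv := fun p => match p with
    | Sum.inl (Sum.inl r, false) => (C.iriLbl, C.iVal (G.aI r))
    | Sum.inl (Sum.inl r, true) => (C.typeLbl, C.iVal (G.dI r))
    | Sum.inl (Sum.inr l, false) => (C.valueLbl, C.lVal (G.aL l))
    | Sum.inl (Sum.inr l, true) => (C.typeLbl, C.iVal (G.dL l))
    | Sum.inr (Sum.inl op) => (C.typeLbl, C.iVal (G.dO op))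
    | Sum.inr (Sum.inr dp) => (C.typeLbl, C.iVal (G.dD dp))
  ends := Sum.elim
    (fun op => (Sum.inl (G.bO op).1, Sum.inl (G.bO op).2))
    (fun dp => (Sum.inl (G.bD dp).1, Sum.inr (G.bD dp).2))
  props := Sum.elim
    (fun n => {p | ∃ b, p = Sum.inl (n, b)})
    (fun e => {p | p = Sum.inr e})

/-- The generic property graph schema S*: node types `Resource` (false) and
`Literal` (true); edge types `ObjectProperty` (false) and `DatatypeProperty`
(true); property types 0 = ('iri',String), 1 = ('type',String) on Resource,
2 = ('value',String), 3 = ('type',String) on Literal, 4 = ('type',String) on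
ObjectProperty, 5 = ('type',String) on DatatypeProperty. -/
def genericSchema (C : Ctx) : PGSchema C where
  NT := Bool
  ET := Bool
  PT := Fin 6
  tlab := Sum.elim (fun b => cond b C.litLbl C.resLbl)
    (fun b => cond b C.dtpLbl C.objLbl)
  tpv := fun i =>
    (if i = 0 then C.iriLbl else if i = 2 then C.valueLbl else C.typeLbl, C.stringDT)
  tends := fun b => (false, b)
  tprops := Sum.elim
    (fun b => cond b ({2, 3} : Set (Fin 6)) ({0, 1} : Set (Fin 6)))
    (fun b => cond b ({5} : Set (Fin 6)) ({4} : Set (Fin 6)))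

theorem valid_src (C : Ctx) (G : PG C) (hv : PGValid C G (genericSchema C)) (e : G.E) :
    G.lab (Sum.inl (G.ends e).1) = C.resLbl := by
  obtain ⟨et, nt, nt', hends, _, h1, _, _⟩ := hv.2 e
  have hnt : nt = false := by
    have h := congrArg Prod.fst hends
    simpa [genericSchema] using h.symm
  subst hnt
  simpa [genericSchema] using h1

theorem valid_tgt_obj (C : Ctx) (G : PG C) (hv : PGValid C G (genericSchema C)) (e : G.E)
    (he : G.lab (Sum.inr e) = C.objLbl) :
    G.lab (Sum.inl (G.ends e).2) = C.resLbl := by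
  obtain ⟨et, nt, nt', hends, hlabe, _, h2, _⟩ := hv.2 e
  have h : et = nt' := by
    have h := congrArg Prod.snd hends
    simpa [genericSchema] using h
  cases et with
  | true =>
      exfalso
      apply C.obj_ne_dtp
      rw [← he, hlabe]
      simp [genericSchema]
  | false =>
      rw [← h] at h2
      simpa [genericSchema] using h2

theorem valid_tgt_dtp (C : Ctx) (G : PG C) (hv : PGValid C G (genericSchema C)) (e : G.E)
    (he : G.lab (Sum.inr e) = C.dtpLbl) :
    G.lab (Sum.inl (G.ends e).2) = C.litLbl := by
  obtain ⟨et, nt, nt', hends, hlabe, _, h2, _⟩ := hv.2 e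
  have h : et = nt' := by
    have h := congrArg Prod.snd hends
    simpa [genericSchema] using h
  cases et with
  | false =>
      exfalso
      apply C.obj_ne_dtp
      have : G.lab (Sum.inr e) = C.objLbl := by
        rw [hlabe]; simp [genericSchema]
      rw [← this, he]
  | true =>
      rw [← h] at h2
      simpa [genericSchema] using h2

/-- The inverse instance mapping IM₂⁻¹, defined on property graphs that are
valid with respect to the generic schema S*. -/
noncomputable def IM2inv (C : Ctx) (G : PG C) (hv : PGValid C G (genericSchema C)) :
    RDFGraph C where
  NI := {n : G.N // G.lab (Sum.inl n) = C.resLbl}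
  NL := {n : G.N // G.lab (Sum.inl n) = C.litLbl}
  EO := {e : G.E // G.lab (Sum.inr e) = C.objLbl}
  ED := {e : G.E // G.lab (Sum.inr e) = C.dtpLbl}
  aI := fun n => C.valIri (propVal C G (Sum.inl n.1) C.iriLbl)
  aL := fun n => C.valLit (propVal C G (Sum.inl n.1) C.valueLbl)
  bO := fun e => (⟨(G.ends e.1).1, valid_src C G hv e.1⟩,
                  ⟨(G.ends e.1).2, valid_tgt_obj C G hv e.1 e.2⟩)
  bD := fun e => (⟨(G.ends e.1).1, valid_src C G hv e.1⟩,
                  ⟨(G.ends e.1).2, valid_tgt_dtp C G hv e.1 e.2⟩)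
  dI := fun n => C.valIri (propVal C G (Sum.inl n.1) C.typeLbl)
  dL := fun n => C.valIri (propVal C G (Sum.inl n.1) C.typeLbl)
  dO := fun e => C.valIri (propVal C G (Sum.inr e.1) C.typeLbl)
  dD := fun e => C.valIri (propVal C G (Sum.inr e.1) C.typeLbl)

/-- An isomorphism of RDF graphs: bijections between the corresponding node
and edge sets commuting with α_I, α_L, β_O, β_D and δ. -/
structure RDFIso (C : Ctx) (G₁ G₂ : RDFGraph C) : Type where
  eNI : G₁.NI ≃ G₂.NI
  eNL : G₁.NL ≃ G₂.NL
  eEO : G₁.EO ≃ G₂.EO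
  eED : G₁.ED ≃ G₂.ED
  haI : ∀ r, G₂.aI (eNI r) = G₁.aI r
  haL : ∀ l, G₂.aL (eNL l) = G₁.aL l
  hbO : ∀ e, G₂.bO (eEO e) = (eNI (G₁.bO e).1, eNI (G₁.bO e).2)
  hbD : ∀ e, G₂.bD (eED e) = (eNI (G₁.bD e).1, eNL (G₁.bD e).2)
  hdI : ∀ r, G₂.dI (eNI r) = G₁.dI r
  hdL : ∀ l, G₂.dL (eNL l) = G₁.dL l
  hdO : ∀ e, G₂.dO (eEO e) = G₁.dO e
  hdD : ∀ e, G₂.dD (eED e) = G₁.dD e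

/-- An isomorphism of RDF graph schemas: bijections on resource classes and
property classes commuting with φ and ϕ. -/
structure RDFSchemaIso (C : Ctx) (S₁ S₂ : RDFSchema C) : Type where
  eNS : S₁.NS ≃ S₂.NS
  eES : S₁.ES ≃ S₂.ES
  hphiN : ∀ rc, S₂.phiN (eNS rc) = S₁.phiN rc
  hphiE : ∀ pc, S₂.phiE (eES pc) = S₁.phiE pc
  hdom : ∀ pc, S₂.dom (eES pc) = eNS (S₁.dom pc)
  hrng : ∀ pc, S₂.rng (eES pc) = eNS (S₁.rng pc)

/-- An isomorphism of property graphs: bijections on nodes, edges and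
properties commuting with Γ, Υ, Σ and Δ. -/
structure PGIso (C : Ctx) (G₁ G₂ : PG C) : Type where
  eN : G₁.N ≃ G₂.N
  eE : G₁.E ≃ G₂.E
  eP : G₁.P ≃ G₂.P
  hlab : ∀ o, G₂.lab (Equiv.sumCongr eN eE o) = G₁.lab o
  hpv : ∀ p, G₂.pv (eP p) = G₁.pv p
  hends : ∀ e, G₂.ends (eE e) = (eN (G₁.ends e).1, eN (G₁.ends e).2)
  hprops : ∀ o p, eP p ∈ G₂.props (Equiv.sumCongr eN eE o) ↔ p ∈ G₁.props o

/-- An isomorphism of property graph schemas: bijections on node types, edge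
types and property types commuting with Θ, Π, Φ and Ψ. -/
structure PGSchemaIso (C : Ctx) (S₁ S₂ : PGSchema C) : Type where
  eNT : S₁.NT ≃ S₂.NT
  eET : S₁.ET ≃ S₂.ET
  ePT : S₁.PT ≃ S₂.PT
  htlab : ∀ o, S₂.tlab (Equiv.sumCongr eNT eET o) = S₁.tlab o
  htpv : ∀ pt, S₂.tpv (ePT pt) = S₁.tpv pt
  htends : ∀ et, S₂.tends (eET et) = (eNT (S₁.tends et).1, eNT (S₁.tends et).2)
  htprops : ∀ o pt, ePT pt ∈ S₂.tprops (Equiv.sumCongr eNT eET o) ↔ pt ∈ S₁.tprops o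

/-- For every RDF graph schema S^R, the output SM₁(S^R) is a
well-formed property graph schema (finite sets of node, edge and property
types, total Θ, Π, Φ, and Ψ partial into non-empty pairwise-disjoint sets of
property types; totality and non-emptiness-on-the-domain are built into the
encoding). -/
theorem sm1_wellformed (C : Ctx) (S : RDFSchema C) (hS : S.WF) :
    (SM1 C S).WF := by
  obtain ⟨hNS, hES, _, _⟩ := hS
  refine ⟨Subtype.finite, Subtype.finite, Finite.instSum, ?_⟩
  intro o₁ o₂ hne; unfold SM1 at *; revert o₁ o₂ hne
  rintro (nt₁ | et₁) (nt₂ | et₂) hne <;>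
    simp only [SM1, Sum.elim_inl, Sum.elim_inr, disjoint_bot_left, disjoint_bot_right,
      Set.disjoint_empty, Set.empty_disjoint]
  · rw [Set.disjoint_left]
    rintro (nt' | pc) h1 h2
    · exact hne (by simp_all [Set.mem_setOf_eq])
    · simp only [Set.mem_setOf_eq] at h1 h2
      exact hne (congrArg Sum.inl (Subtype.ext (h1 ▸ h2)))
end

section
/- For every RDF graph G^R, the output IM₁(G^R) of the instance mapping IM₁ is a well-formed property graph: its sets of nodes, edges and properties are finite and mutually disjoint, the functions Γ, Υ, Σ are total, and the partial function Δ assigns to each node in its domain a non-empty set of properties such that Δ(o₁) ∩ Δ(o₂) = ∅ for distinct o₁, o₂ in its domain. -/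
/-- For every RDF graph G^R, the output IM₁(G^R) is a
well-formed property graph (finite mutually disjoint sets of nodes, edges and
properties, total Γ, Υ, Σ, and Δ partial into non-empty pairwise-disjoint
sets of properties; totality, mutual disjointness of the carrier sets and
non-emptiness-on-the-domain are built into the encoding). -/
theorem im1_wellformed (C : Ctx) (G : RDFGraph C) (hG : G.WF) :
    (IM1 C G).WF := by
  obtain ⟨h1, h2, h3, h4, _, _⟩ := hG
  refine ⟨h1, h3, ?_, ?_⟩
  · have := h1; have := h4; exact Finite.instSum
  · rintro (n₁ | e₁) (n₂ | e₂) hne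
    · rw [Set.disjoint_left]
      rintro (r | dp) hp₁ hp₂ <;>
        simp only [IM1, Sum.elim_inl, Set.mem_setOf_eq] at hp₁ hp₂ <;>
        exact hne (by rw [← hp₁, ← hp₂])
    · rw [Set.disjoint_left]; rintro p _ hp
      simp [IM1] at hp
      exact absurd hp (Set.notMem_empty p)
    · rw [Set.disjoint_left]; rintro p hp
      simp [IM1] at hp
      exact absurd hp (Set.notMem_empty p)
    · rw [Set.disjoint_left]; rintro p hp
      simp [IM1] at hp
      exact absurd hp (Set.notMem_empty p)
end

section
/- The database mapping DM₁ = (SM₁, IM₁) is semantics preserving: for every RDF database (S^R, G^R) with G^R ⊨ S^R, such that for every literal node l of G^R one has δ(l) ∈ I_DT and type(α_L(l)) = f(δ(l)), for every resource node r one has δ(r) ∉ I_DT, and type(u) = String for every IRI u regarded as a value, the property graph IM₁(G^R) is valid with respect to the property graph schema SM₁(S^R); hence (SM₁(S^R), IM₁(G^R)) is a valid property graph database. -/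
/-- The database mapping DM₁ = (SM₁, IM₁) is semantics
preserving: for every RDF database (S^R, G^R) with G^R ⊨ S^R, such that every
literal node l has δ(l) ∈ I_DT and type(α_L(l)) = f(δ(l)), every resource
node r has δ(r) ∉ I_DT, and type(u) = String for every IRI u regarded as a
value, the property graph IM₁(G^R) is valid with respect to SM₁(S^R); hence
(SM₁(S^R), IM₁(G^R)) is a valid property graph database. -/
theorem dm1_semantics_preserving (C : Ctx) (S : RDFSchema C) (G : RDFGraph C)
    (hS : S.WF) (hG : G.WF) (hval : RDFValid C G S)
    (hlit_dt : ∀ l : G.NL, G.dL l ∈ C.IDT)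
    (hlit_type : ∀ l : G.NL, C.typeOf (C.lVal (G.aL l)) = C.f ⟨G.dL l, hlit_dt l⟩)
    (hres : ∀ r : G.NI, G.dI r ∉ C.IDT)
    (hiri_type : ∀ i : C.Iri, C.typeOf (C.iVal i) = C.stringDT) :
    (SM1 C S).WF ∧ (IM1 C G).WF ∧ PGValid C (IM1 C G) (SM1 C S) := by
  obtain ⟨hNS, hES, hinj, hIV⟩ := hS
  obtain ⟨hNI, hNL, hEO, hED, haIinj, haLinj⟩ := hG
  have phiN_inj : Function.Injective S.phiN := fun a b h => by
    have := hinj (show Sum.elim S.phiN S.phiE (Sum.inl a) =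
        Sum.elim S.phiN S.phiE (Sum.inl b) by simpa using h)
    simpa using this
  refine ⟨⟨?_, ?_, ?_, ?_⟩, ⟨hNI, hEO, ?_, ?_⟩, ?_, ?_⟩
  · exact Subtype.finite
  · exact Subtype.finite
  · exact Finite.instSum
  · -- tprops disjoint
    rintro (nt₁ | et₁) (nt₂ | et₂) hne
    · simp only [SM1, Sum.elim_inl, Sum.elim, Set.disjoint_left]
      refine Set.disjoint_left.mpr ?_
      rintro (nt' | pc) hp₁ hp₂
      · exact hne (by simp_all)
      · exact hne (by
          simp only [Set.mem_setOf_eq] at hp₁ hp₂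
          exact congrArg Sum.inl (Subtype.ext (hp₁ ▸ hp₂ ▸ rfl)))
    · exact Set.disjoint_left.mpr (fun _ _ h => h)
    · exact Set.disjoint_left.mpr (fun _ h _ => h)
    · exact Set.disjoint_left.mpr (fun _ h _ => h)
  · exact Finite.instSum
  · -- props disjoint
    rintro (n₁ | e₁) (n₂ | e₂) hne
    · simp only [IM1, Sum.elim_inl, Sum.elim, Set.disjoint_left]
      refine Set.disjoint_left.mpr ?_
      rintro (r | dp) hp₁ hp₂
      · exact hne (by simp_all)
      · simp only [Set.mem_setOf_eq] at hp₁ hp₂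
        exact hne (congrArg Sum.inl (hp₁ ▸ hp₂ ▸ rfl))
    · exact Set.disjoint_left.mpr (fun _ _ h => h)
    · exact Set.disjoint_left.mpr (fun _ h _ => h)
    · exact Set.disjoint_left.mpr (fun _ h _ => h)
  · -- node validity
    intro n
    obtain ⟨rc, hrc⟩ := hval.1 n
    have hrcdt : S.phiN rc ∉ C.IDT := hrc ▸ hres n
    refine ⟨⟨rc, hrcdt⟩, by simp [IM1, SM1, Sum.elim, hrc], ?_⟩
    rintro (r | dp) hp
    · simp only [IM1, Sum.elim_inl, Set.mem_setOf_eq] at hp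
      subst hp
      exact ⟨Sum.inl ⟨rc, hrcdt⟩, rfl, by simp [IM1, SM1, hiri_type]⟩
    · simp only [IM1, Sum.elim_inl, Set.mem_setOf_eq] at hp
      obtain ⟨pc, hpc, h₁, h₂⟩ := hval.2.2.2 dp
      have hdom : S.phiN (S.dom pc) ∉ C.IDT := h₁ ▸ hres (G.bD dp).1
      have hrng : S.phiN (S.rng pc) ∈ C.IDT := h₂ ▸ hlit_dt (G.bD dp).2
      have hdomrc : S.dom pc = rc := phiN_inj (by rw [← h₁, hp, hrc])
      refine ⟨Sum.inr ⟨pc, hdom, hrng⟩, hdomrc, ?_⟩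
      simp only [IM1, SM1, Sum.elim_inr]
      rw [hlit_type (G.bD dp).2, hpc]
      exact congrArg _ (congrArg C.f (Subtype.ext h₂.symm))
  · -- edge validity
    intro e
    obtain ⟨pc, hpc, h₁, h₂⟩ := hval.2.2.1 e
    have hdom : S.phiN (S.dom pc) ∉ C.IDT := h₁ ▸ hres (G.bO e).1
    have hrng : S.phiN (S.rng pc) ∉ C.IDT := h₂ ▸ hres (G.bO e).2
    refine ⟨⟨pc, hdom, hrng⟩, ⟨S.dom pc, hdom⟩, ⟨S.rng pc, hrng⟩, rfl,
      by simp [IM1, SM1, Sum.elim, hpc], by simp [IM1, SM1, Sum.elim, h₁], by simp [IM1, SM1, Sum.elim, h₂], ?_⟩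
    rintro p hp
    exact absurd hp (Set.notMem_empty p)
end

section
/- Schema recovery for DM₁: let S^R = (N_S, E_S, φ, ϕ) be an RDF graph schema such that φ is injective, no class has IRI 'iri', and every resource class rc with φ(rc) ∈ I_DT occurs as the second component of ϕ(pc) for at least one property class pc. Then SM₁⁻¹(SM₁(S^R)) is isomorphic to S^R, i.e., there are bijections between the resource classes and between the property classes of SM₁⁻¹(SM₁(S^R)) and those of S^R commuting with φ and ϕ. -/
/-- Schema recovery for DM₁: if S^R is an RDF graph schema such
that φ is injective (part of well-formedness), no class has IRI 'iri',
domains of property classes are not datatype classes (the implicit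
presupposition making SM₁ well-defined), and every resource class rc with
φ(rc) ∈ I_DT occurs as the second component of ϕ(pc) for some property class
pc, then SM₁⁻¹(SM₁(S^R)) is isomorphic to S^R. -/
theorem sm1_schema_recovery (C : Ctx) (S : RDFSchema C) (hS : S.WF)
    (hiri : ∀ x : S.NS ⊕ S.ES, C.iLbl (Sum.elim S.phiN S.phiE x) ≠ C.iriLbl)
    (hdom : ∀ pc : S.ES, S.phiN (S.dom pc) ∉ C.IDT)
    (hdt_used : ∀ rc : S.NS, S.phiN rc ∈ C.IDT → ∃ pc : S.ES, S.rng pc = rc) :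
    Nonempty (RDFSchemaIso C (SM1inv C (SM1 C S)) S) := by
  classical
  obtain ⟨hfinN, hfinE, hinj, hIV⟩ := hS
  have phiN_inj : Function.Injective S.phiN := fun a b h => by
    have := @hinj (Sum.inl a) (Sum.inl b) (by simpa using h)
    simpa using this
  have witness : ∀ (rc : S.NS) (h : S.phiN rc ∈ C.IDT),
      ∃ pt : (SM1 C S).PT, ((SM1 C S).tpv pt).1 ≠ C.iriLbl ∧
        ((SM1 C S).tpv pt).2 = C.f ⟨S.phiN rc, h⟩ := by
    intro rc h
    obtain ⟨pc, hpc⟩ := hdt_used rc h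
    refine ⟨Sum.inr ⟨pc, hdom pc, by rw [hpc]; exact h⟩, hiri (Sum.inr pc), ?_⟩
    show C.f _ = C.f ⟨S.phiN rc, h⟩
    congr 1
    exact Subtype.ext (by simp [hpc])
  let gN : S.NS → (SM1inv C (SM1 C S)).NS := fun rc =>
    if h : S.phiN rc ∈ C.IDT then Sum.inl ⟨C.f ⟨S.phiN rc, h⟩, witness rc h⟩
    else Sum.inr ⟨rc, h⟩
  let gE : S.ES → (SM1inv C (SM1 C S)).ES := fun pc =>
    if h : S.phiN (S.rng pc) ∈ C.IDT then
      Sum.inr ⟨(⟨S.dom pc, hdom pc⟩, Sum.inr ⟨pc, hdom pc, h⟩), ⟨rfl, hiri (Sum.inr pc)⟩⟩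
    else Sum.inl ⟨pc, hdom pc, h⟩
  have hbijN : Function.Bijective gN := by
    constructor
    · intro a b hab
      by_cases ha : S.phiN a ∈ C.IDT <;> by_cases hb : S.phiN b ∈ C.IDT <;>
        simp only [gN, dif_pos, dif_neg, ha, hb, ↓reduceDIte] at hab
      · have h1 : C.f ⟨S.phiN a, ha⟩ = C.f ⟨S.phiN b, hb⟩ := by
          have := Sum.inl.inj hab
          exact congrArg Subtype.val this
        have h2 := C.f_bij.1 h1
        exact phiN_inj (congrArg Subtype.val h2)
      · exact absurd hab (by simp)
      · exact absurd hab (by simp)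
      · have := Sum.inr.inj hab
        exact congrArg Subtype.val this
    · intro x
      match x with
      | Sum.inr nt =>
          refine ⟨nt.1, ?_⟩
          simp only [gN, dif_neg nt.2, nt.2, ↓reduceDIte]
          exact congrArg Sum.inr (Subtype.ext rfl)
      | Sum.inl ⟨dt, hdt⟩ =>
          obtain ⟨pt, hne, heq⟩ := hdt
          match pt with
          | Sum.inl nt => exact absurd rfl hne
          | Sum.inr pcd =>
            refine ⟨S.rng pcd.1, ?_⟩
            simp only [gN, dif_pos pcd.2.2, pcd.2.2, ↓reduceDIte]
            exact congrArg Sum.inl (Subtype.ext heq)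
  have hbijE : Function.Bijective gE := by
    constructor
    · intro a b hab
      by_cases ha : S.phiN (S.rng a) ∈ C.IDT <;> by_cases hb : S.phiN (S.rng b) ∈ C.IDT <;>
        simp only [gE, dif_pos, dif_neg, ha, hb, ↓reduceDIte] at hab
      · have h1 := congrArg Subtype.val (Sum.inr.inj hab)
        have h2 := congrArg Prod.snd h1
        have h3 := Sum.inr.inj h2
        exact congrArg Subtype.val h3
      · exact absurd hab (by simp)
      · exact absurd hab (by simp)
      · exact congrArg Subtype.val (Sum.inl.inj hab)
    · intro x
      match x with
      | Sum.inl et =>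
          refine ⟨et.1, ?_⟩
          simp only [gE, dif_neg et.2.2, et.2.2, ↓reduceDIte]
          exact congrArg Sum.inl (Subtype.ext rfl)
      | Sum.inr ⟨(nt, pt), hmem, hne⟩ =>
          match pt with
          | Sum.inl nt' => exact absurd rfl hne
          | Sum.inr pcd =>
            refine ⟨pcd.1, ?_⟩
            have hd : S.dom pcd.1 = nt.1 := hmem
            simp only [gE, dif_pos pcd.2.2, pcd.2.2, ↓reduceDIte]
            exact congrArg Sum.inr (Subtype.ext (Prod.ext (Subtype.ext hd) rfl))
  have keyN : ∀ rc, (SM1inv C (SM1 C S)).phiN (gN rc) = S.phiN rc := by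
    intro rc
    by_cases h : S.phiN rc ∈ C.IDT <;> simp only [gN, dif_pos, dif_neg, h, ↓reduceDIte]
    · exact C.finv_f _ h
    · exact C.lblIri_iLbl _
  have keyE : ∀ pc, (SM1inv C (SM1 C S)).phiE (gE pc) = S.phiE pc := by
    intro pc
    by_cases h : S.phiN (S.rng pc) ∈ C.IDT <;> simp only [gE, dif_pos, dif_neg, h, ↓reduceDIte] <;>
      exact C.lblIri_iLbl _
  have keyDom : ∀ pc, (SM1inv C (SM1 C S)).dom (gE pc) = gN (S.dom pc) := by
    intro pc
    by_cases h : S.phiN (S.rng pc) ∈ C.IDT <;>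
      simp only [gE, gN, dif_pos, dif_neg, h, hdom pc, ↓reduceDIte] <;> rfl
  have keyRng : ∀ pc, (SM1inv C (SM1 C S)).rng (gE pc) = gN (S.rng pc) := by
    intro pc
    by_cases h : S.phiN (S.rng pc) ∈ C.IDT <;>
      simp only [gE, gN, dif_pos, dif_neg, h, ↓reduceDIte]
    · exact congrArg Sum.inl (Subtype.ext rfl)
    · rfl
  let eN : (SM1inv C (SM1 C S)).NS ≃ S.NS := (Equiv.ofBijective gN hbijN).symm
  let eE : (SM1inv C (SM1 C S)).ES ≃ S.ES := (Equiv.ofBijective gE hbijE).symm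
  have hgN : ∀ x, gN (eN x) = x := fun x =>
    (Equiv.ofBijective gN hbijN).apply_symm_apply x
  have hgE : ∀ x, gE (eE x) = x := fun x =>
    (Equiv.ofBijective gE hbijE).apply_symm_apply x
  refine ⟨⟨eN, eE, ?_, ?_, ?_, ?_⟩⟩
  · intro rc
    conv_rhs => rw [← hgN rc]
    exact (keyN (eN rc)).symm
  · intro pc
    conv_rhs => rw [← hgE pc]
    exact (keyE (eE pc)).symm
  · intro pc
    have h1 : (SM1inv C (SM1 C S)).dom pc = gN (S.dom (eE pc)) := by
      conv_lhs => rw [← hgE pc]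
      exact keyDom (eE pc)
    rw [h1]
    exact ((Equiv.ofBijective gN hbijN).symm_apply_apply (S.dom (eE pc))).symm
  · intro pc
    have h1 : (SM1inv C (SM1 C S)).rng pc = gN (S.rng (eE pc)) := by
      conv_lhs => rw [← hgE pc]
      exact keyRng (eE pc)
    rw [h1]
    exact ((Equiv.ofBijective gN hbijN).symm_apply_apply (S.rng (eE pc))).symm
end

section
/- Instance recovery for DM₁: let G^R be an RDF graph such that every literal node is the target of at least one datatype-property edge, type(α_L(l)) = f(δ(l)) for every literal node l, and no datatype-property edge has class label 'iri'. Then IM₁⁻¹(IM₁(G^R)) is isomorphic to G^R, i.e., there are bijections between the resource nodes, literal nodes, object-property edges and datatype-property edges of IM₁⁻¹(IM₁(G^R)) and those of G^R commuting with α_I, α_L, β_O, β_D and δ. -/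
/-- Instance recovery for DM₁: if G^R is an RDF graph such that
every literal node is the target of at least one datatype-property edge,
type(α_L(l)) = f(δ(l)) for every literal node l, and no datatype-property
edge has class label 'iri', then IM₁⁻¹(IM₁(G^R)) is isomorphic to G^R. -/
theorem im1_instance_recovery (C : Ctx) (G : RDFGraph C) (hG : G.WF)
    (hlit_used : ∀ l : G.NL, ∃ dp : G.ED, (G.bD dp).2 = l)
    (hlit_dt : ∀ l : G.NL, G.dL l ∈ C.IDT)
    (hlit_type : ∀ l : G.NL, C.typeOf (C.lVal (G.aL l)) = C.f ⟨G.dL l, hlit_dt l⟩)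
    (hdp_ne_iri : ∀ dp : G.ED, C.iLbl (G.dD dp) ≠ C.iriLbl) :
    Nonempty (RDFIso C (IM1inv C (IM1 C G)) G) := by
  classical
  set H := IM1 C G with hH
  have hprop : ∀ r : G.NI, propVal C H (Sum.inl r) C.iriLbl = C.iVal (G.aI r) := by
    intro r
    haveI : Nonempty C.Val := @Infinite.nonempty _ C.infVal
    have hex : ∃ v, ∃ p ∈ H.props (Sum.inl r), H.pv p = (C.iriLbl, v) :=
      ⟨C.iVal (G.aI r), Sum.inl r, rfl, rfl⟩
    obtain ⟨p, hp, hpv⟩ := Classical.epsilon_spec hex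
    rcases p with r' | dp
    · have hr : r' = r := hp
      subst hr
      have hv := congrArg Prod.snd hpv
      exact hv.symm
    · exact absurd (congrArg Prod.fst hpv) (hdp_ne_iri dp)
  have hinjL : Function.Injective G.aL := hG.2.2.2.2.2
  let g : G.NL → (IM1inv C H).NL := fun l =>
    ⟨C.lVal (G.aL l), by
      obtain ⟨dp, hdp⟩ := hlit_used l
      exact ⟨(G.bD dp).1, Sum.inr dp, rfl, hdp_ne_iri dp,
        congrArg (fun t => C.lVal (G.aL t)) hdp⟩⟩
  have hg : Function.Bijective g := by
    constructor
    · intro a b hab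
      exact hinjL (C.lVal_inj (congrArg Subtype.val hab))
    · rintro ⟨v, n, p, hp, hne, hv⟩
      rcases p with r | dp
      · exact absurd rfl hne
      · exact ⟨(G.bD dp).2, Subtype.ext hv⟩
  let h : G.ED → (IM1inv C H).ED := fun dp =>
    ⟨((G.bD dp).1, Sum.inr dp), rfl, hdp_ne_iri dp⟩
  have hh : Function.Bijective h := by
    constructor
    · intro a b hab
      have h2 := congrArg (fun x => x.1.2) hab
      exact Sum.inr.inj h2
    · rintro ⟨⟨n, p⟩, hp, hne⟩
      rcases p with r | dp
      · exact absurd rfl hne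
      · have hn : (G.bD dp).1 = n := hp
        refine ⟨dp, Subtype.ext ?_⟩
        show ((G.bD dp).1, (Sum.inr dp : G.NI ⊕ G.ED)) = (n, Sum.inr dp)
        rw [hn]
        rfl
  let eg := Equiv.ofBijective g hg
  let eh := Equiv.ofBijective h hh
  refine ⟨{
    eNI := Equiv.refl G.NI
    eNL := eg.symm
    eEO := Equiv.refl G.EO
    eED := eh.symm
    haI := ?_
    haL := ?_
    hbO := ?_
    hbD := ?_
    hdI := ?_
    hdL := ?_
    hdO := ?_
    hdD := ?_ }⟩
  · intro r
    show G.aI r = C.valIri (propVal C H (Sum.inl r) C.iriLbl)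
    rw [hprop r, C.valIri_iVal]
  · intro l
    have hl : g (eg.symm l) = l := eg.apply_symm_apply l
    conv_rhs => rw [← hl]
    show G.aL (eg.symm l) = C.valLit (C.lVal (G.aL (eg.symm l)))
    rw [C.valLit_lVal]
  · intro e
    rfl
  · intro x
    obtain ⟨dp, rfl⟩ := hh.2 x
    have hd : eh.symm (h dp) = dp := eh.symm_apply_apply dp
    rw [hd]
    have h3 : eg.symm ((IM1inv C H).bD (h dp)).2 = (G.bD dp).2 := eg.symm_apply_apply _
    show G.bD dp = (((IM1inv C H).bD (h dp)).1, eg.symm ((IM1inv C H).bD (h dp)).2)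
    rw [h3]
    rfl
  · intro r
    show G.dI r = C.lblIri (C.iLbl (G.dI r))
    rw [C.lblIri_iLbl]
  · intro l
    have hl : g (eg.symm l) = l := eg.apply_symm_apply l
    conv_rhs => rw [← hl]
    show G.dL (eg.symm l) = C.finv (C.typeOf (C.lVal (G.aL (eg.symm l))))
    rw [hlit_type, C.finv_f]
  · intro e
    show G.dO e = C.lblIri (C.iLbl (G.dO e))
    rw [C.lblIri_iLbl]
  · intro x
    obtain ⟨dp, rfl⟩ := hh.2 x
    have hd : eh.symm (h dp) = dp := eh.symm_apply_apply dp
    rw [hd]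
    show G.dD dp = C.lblIri (C.iLbl (G.dD dp))
    rw [C.lblIri_iLbl]
end

section
/- The inverse database mapping DM₁⁻¹ = (SM₁⁻¹, IM₁⁻¹) is semantics preserving on the image of DM₁: for every RDF database (S^R, G^R) with G^R ⊨ S^R (with φ injective, no class labeled 'iri', every datatype resource class used as the range of some property class, every literal node attached to some datatype-property edge, and type(α_L(l)) = f(δ(l)) for every literal node l), the RDF graph IM₁⁻¹(IM₁(G^R)) is valid with respect to the RDF graph schema SM₁⁻¹(SM₁(S^R)). -/
/-- The inverse database mapping DM₁⁻¹ = (SM₁⁻¹, IM₁⁻¹) is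
semantics preserving on the image of DM₁: for every RDF database (S^R, G^R)
with G^R ⊨ S^R (under the stated side conditions), the RDF graph
IM₁⁻¹(IM₁(G^R)) is valid with respect to the RDF graph schema
SM₁⁻¹(SM₁(S^R)). -/
theorem dm1inv_semantics_preserving (C : Ctx) (S : RDFSchema C) (G : RDFGraph C)
    (hS : S.WF) (hG : G.WF) (hval : RDFValid C G S)
    (hiri : ∀ x : S.NS ⊕ S.ES, C.iLbl (Sum.elim S.phiN S.phiE x) ≠ C.iriLbl)
    (hdom : ∀ pc : S.ES, S.phiN (S.dom pc) ∉ C.IDT)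
    (hdt_used : ∀ rc : S.NS, S.phiN rc ∈ C.IDT → ∃ pc : S.ES, S.rng pc = rc)
    (hlit_used : ∀ l : G.NL, ∃ dp : G.ED, (G.bD dp).2 = l)
    (hlit_dt : ∀ l : G.NL, G.dL l ∈ C.IDT)
    (hlit_type : ∀ l : G.NL, C.typeOf (C.lVal (G.aL l)) = C.f ⟨G.dL l, hlit_dt l⟩) :
    RDFValid C (IM1inv C (IM1 C G)) (SM1inv C (SM1 C S)) := by
  refine ⟨?_, ?_, ?_, ?_⟩
  · -- resource nodes
    intro r
    obtain ⟨rc, hrc⟩ := hval.1 r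
    by_cases h : S.phiN rc ∈ C.IDT
    · obtain ⟨pc, hpc⟩ := hdt_used rc h
      have hrng : S.phiN (S.rng pc) ∈ C.IDT := by rw [hpc]; exact h
      refine ⟨Sum.inl ⟨C.f ⟨S.phiN rc, h⟩,
        Sum.inr ⟨pc, hdom pc, hrng⟩, hiri (Sum.inr pc), ?_⟩, ?_⟩
      · show C.f ⟨S.phiN (S.rng pc), hrng⟩ = C.f ⟨S.phiN rc, h⟩
        congr 1
        apply Subtype.ext
        show S.phiN (S.rng pc) = S.phiN rc
        rw [hpc]
      · show C.lblIri (C.iLbl (G.dI r)) = C.finv (C.f ⟨S.phiN rc, h⟩)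
        rw [C.lblIri_iLbl, C.finv_f, hrc]
    · refine ⟨Sum.inr ⟨rc, h⟩, ?_⟩
      show C.lblIri (C.iLbl (G.dI r)) = C.lblIri (C.iLbl (S.phiN rc))
      rw [C.lblIri_iLbl, C.lblIri_iLbl, hrc]
  · -- literal nodes
    rintro ⟨v, hv⟩
    obtain ⟨n, p, hp, hne, hveq⟩ := hv
    cases p with
    | inl r => exact absurd rfl hne
    | inr dp =>
      obtain ⟨pc, h1, h2, h3⟩ := hval.2.2.2 dp
      have hrng : S.phiN (S.rng pc) ∈ C.IDT := h3 ▸ hlit_dt _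
      refine ⟨Sum.inl ⟨C.typeOf v,
        Sum.inr ⟨pc, hdom pc, hrng⟩, hiri (Sum.inr pc), ?_⟩, rfl⟩
      show C.f ⟨S.phiN (S.rng pc), hrng⟩ = C.typeOf v
      rw [← hveq]
      show C.f ⟨S.phiN (S.rng pc), hrng⟩ = C.typeOf (C.lVal (G.aL (G.bD dp).2))
      rw [hlit_type]
      congr 1
      exact Subtype.ext h3.symm
  · -- object property edges
    intro e
    obtain ⟨pc, h1, h2, h3⟩ := hval.2.2.1 e
    by_cases h : S.phiN (S.rng pc) ∈ C.IDT
    · refine ⟨Sum.inr ⟨(⟨S.dom pc, hdom pc⟩, Sum.inr ⟨pc, hdom pc, h⟩),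
        rfl, hiri (Sum.inr pc)⟩, ?_, ?_, ?_⟩
      · show C.lblIri (C.iLbl (G.dO e)) = C.lblIri (C.iLbl (S.phiE pc))
        rw [C.lblIri_iLbl, C.lblIri_iLbl, h1]
      · show C.lblIri (C.iLbl (G.dI (G.bO e).1)) = C.lblIri (C.iLbl (S.phiN (S.dom pc)))
        rw [C.lblIri_iLbl, C.lblIri_iLbl, h2]
      · show C.lblIri (C.iLbl (G.dI (G.bO e).2)) = C.finv (C.f ⟨S.phiN (S.rng pc), h⟩)
        rw [C.lblIri_iLbl, C.finv_f, h3]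
    · refine ⟨Sum.inl ⟨pc, hdom pc, h⟩, ?_, ?_, ?_⟩
      · show C.lblIri (C.iLbl (G.dO e)) = C.lblIri (C.iLbl (S.phiE pc))
        rw [C.lblIri_iLbl, C.lblIri_iLbl, h1]
      · show C.lblIri (C.iLbl (G.dI (G.bO e).1)) = C.lblIri (C.iLbl (S.phiN (S.dom pc)))
        rw [C.lblIri_iLbl, C.lblIri_iLbl, h2]
      · show C.lblIri (C.iLbl (G.dI (G.bO e).2)) = C.lblIri (C.iLbl (S.phiN (S.rng pc)))
        rw [C.lblIri_iLbl, C.lblIri_iLbl, h3]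
  · -- datatype property edges
    rintro ⟨⟨n, p⟩, hp, hne⟩
    cases p with
    | inl r => exact absurd rfl hne
    | inr dp =>
      obtain ⟨pc, h1, h2, h3⟩ := hval.2.2.2 dp
      have hrng : S.phiN (S.rng pc) ∈ C.IDT := h3 ▸ hlit_dt _
      have hpn : (G.bD dp).1 = n := hp
      refine ⟨Sum.inr ⟨(⟨S.dom pc, hdom pc⟩, Sum.inr ⟨pc, hdom pc, hrng⟩),
        rfl, hiri (Sum.inr pc)⟩, ?_, ?_, ?_⟩
      · show C.lblIri (C.iLbl (G.dD dp)) = C.lblIri (C.iLbl (S.phiE pc))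
        rw [C.lblIri_iLbl, C.lblIri_iLbl, h1]
      · show C.lblIri (C.iLbl (G.dI n)) = C.lblIri (C.iLbl (S.phiN (S.dom pc)))
        rw [C.lblIri_iLbl, C.lblIri_iLbl, ← hpn, h2]
      · show C.finv (C.typeOf (C.lVal (G.aL (G.bD dp).2))) =
          C.finv (C.f ⟨S.phiN (S.rng pc), hrng⟩)
        rw [hlit_type]
        congr 2
        exact Subtype.ext h3
end

section
/- The database mapping DM₁ is injective up to isomorphism: if D₁ and D₂ are RDF databases (each satisfying: φ injective, no class labeled 'iri', every datatype resource class used as the range of some property class, every literal node attached to some datatype-property edge, and type(α_L(l)) = f(δ(l)) for every literal node l) such that DM₁(D₁) is isomorphic to DM₁(D₂) as property graph databases, then D₁ is isomorphic to D₂ as RDF databases. -/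
/-- The side conditions on an RDF database (S^R, G^R) under which DM₁ is
injective up to isomorphism: validity, no class with IRI 'iri',
property-class domains not datatype classes, every datatype resource class
the range of some property class, every literal node the target of some
datatype-property edge, and type(α_L(l)) = f(δ(l)) for every literal node. -/
def DBGood (C : Ctx) (S : RDFSchema C) (G : RDFGraph C) : Prop :=
  S.WF ∧ G.WF ∧ RDFValid C G S ∧
  (∀ x : S.NS ⊕ S.ES, C.iLbl (Sum.elim S.phiN S.phiE x) ≠ C.iriLbl) ∧
  (∀ pc : S.ES, S.phiN (S.dom pc) ∉ C.IDT) ∧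
  (∀ rc : S.NS, S.phiN rc ∈ C.IDT → ∃ pc : S.ES, S.rng pc = rc) ∧
  (∀ l : G.NL, ∃ dp : G.ED, (G.bD dp).2 = l) ∧
  (∃ h : ∀ l : G.NL, G.dL l ∈ C.IDT,
    ∀ l : G.NL, C.typeOf (C.lVal (G.aL l)) = C.f ⟨G.dL l, h l⟩)

section Aux
open Classical

/-- Symmetry of property graph schema isomorphism. -/
noncomputable def PGSchemaIso.symm {C : Ctx} {S₁ S₂ : PGSchema C} (T : PGSchemaIso C S₁ S₂) :
    PGSchemaIso C S₂ S₁ where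
  eNT := T.eNT.symm
  eET := T.eET.symm
  ePT := T.ePT.symm
  htlab o := by
    have h := T.htlab ((Equiv.sumCongr T.eNT T.eET).symm o)
    rw [Equiv.apply_symm_apply] at h
    rw [← Equiv.sumCongr_symm]
    exact h.symm
  htpv pt := by
    have h := T.htpv (T.ePT.symm pt)
    rw [Equiv.apply_symm_apply] at h
    exact h.symm
  htends et := by
    have h := T.htends (T.eET.symm et)
    rw [Equiv.apply_symm_apply] at h
    rw [h]
    simp
  htprops o pt := by
    have h := T.htprops ((Equiv.sumCongr T.eNT T.eET).symm o) (T.ePT.symm pt)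
    rw [Equiv.apply_symm_apply, Equiv.apply_symm_apply] at h
    rw [← Equiv.sumCongr_symm]
    exact h.symm

/-- Symmetry of property graph isomorphism. -/
noncomputable def PGIso.symm {C : Ctx} {G₁ G₂ : PG C} (P : PGIso C G₁ G₂) :
    PGIso C G₂ G₁ where
  eN := P.eN.symm
  eE := P.eE.symm
  eP := P.eP.symm
  hlab o := by
    have h := P.hlab ((Equiv.sumCongr P.eN P.eE).symm o)
    rw [Equiv.apply_symm_apply] at h
    rw [← Equiv.sumCongr_symm]
    exact h.symm
  hpv p := by
    have h := P.hpv (P.eP.symm p)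
    rw [Equiv.apply_symm_apply] at h
    exact h.symm
  hends e := by
    have h := P.hends (P.eE.symm e)
    rw [Equiv.apply_symm_apply] at h
    rw [h]
    simp
  hprops o p := by
    have h := P.hprops ((Equiv.sumCongr P.eN P.eE).symm o) (P.eP.symm p)
    rw [Equiv.apply_symm_apply, Equiv.apply_symm_apply] at h
    rw [← Equiv.sumCongr_symm]
    exact h.symm

/-- One direction of the schema part of injectivity of DM₁. -/
lemma sm1_half (C : Ctx) (S₁ S₂ : RDFSchema C)
    (injN₂ : Function.Injective S₂.phiN)
    (hi₁ : ∀ x : S₁.NS ⊕ S₁.ES, C.iLbl (Sum.elim S₁.phiN S₁.phiE x) ≠ C.iriLbl)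
    (hi₂ : ∀ x : S₂.NS ⊕ S₂.ES, C.iLbl (Sum.elim S₂.phiN S₂.phiE x) ≠ C.iriLbl)
    (hd₁ : ∀ pc : S₁.ES, S₁.phiN (S₁.dom pc) ∉ C.IDT)
    (hr₁ : ∀ rc : S₁.NS, S₁.phiN rc ∈ C.IDT → ∃ pc, S₁.rng pc = rc)
    (T : PGSchemaIso C (SM1 C S₁) (SM1 C S₂)) :
    ∃ (F : S₁.NS → S₂.NS) (E : S₁.ES → S₂.ES),
      (∀ rc, S₂.phiN (F rc) = S₁.phiN rc) ∧
      (∀ pc, S₂.phiE (E pc) = S₁.phiE pc) ∧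
      (∀ pc, S₂.dom (E pc) = F (S₁.dom pc)) ∧
      (∀ pc, S₂.rng (E pc) = F (S₁.rng pc)) := by
  classical
  -- ePT maps inr to inr
  have hinr : ∀ p : {pc : S₁.ES // S₁.phiN (S₁.dom pc) ∉ C.IDT ∧ S₁.phiN (S₁.rng pc) ∈ C.IDT},
      ∃ q : {pc : S₂.ES // S₂.phiN (S₂.dom pc) ∉ C.IDT ∧ S₂.phiN (S₂.rng pc) ∈ C.IDT},
        T.ePT (Sum.inr p) = Sum.inr q := by
    intro p
    have h := T.htpv (Sum.inr p)
    cases hq : T.ePT (Sum.inr p) with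
    | inl nt₂ =>
        rw [hq] at h
        exact absurd (by simpa [SM1] using (congrArg Prod.fst h).symm)
          (hi₁ (Sum.inr p.1))
    | inr q => exact ⟨q, rfl⟩
  set pcmap := fun p => (hinr p).choose with hpcmap
  have key : ∀ p, S₂.phiE (pcmap p).1 = S₁.phiE p.1 ∧
      S₂.phiN (S₂.rng (pcmap p).1) = S₁.phiN (S₁.rng p.1) := by
    intro p
    have h := T.htpv (Sum.inr p)
    rw [(hinr p).choose_spec] at h
    simp only [SM1, Sum.elim_inr, Prod.mk.injEq] at h
    refine ⟨C.iLbl_inj h.1, ?_⟩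
    have h2 := C.f_bij.injective h.2
    exact congrArg Subtype.val h2
  have key2 : ∀ p, S₂.dom (pcmap p).1 = (T.eNT ⟨S₁.dom p.1, p.2.1⟩).1 := by
    intro p
    have hm : (Sum.inr p : (SM1 C S₁).PT) ∈
        (SM1 C S₁).tprops (Sum.inl ⟨S₁.dom p.1, p.2.1⟩) := rfl
    have h := (T.htprops (Sum.inl ⟨S₁.dom p.1, p.2.1⟩) (Sum.inr p)).mpr hm
    rw [(hinr p).choose_spec] at h
    exact h
  have keyN : ∀ nt : (SM1 C S₁).NT, S₂.phiN (T.eNT nt).1 = S₁.phiN nt.1 := by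
    intro nt
    have h := T.htlab (Sum.inl nt)
    exact C.iLbl_inj h
  have keyE1 : ∀ et : (SM1 C S₁).ET, S₂.phiE (T.eET et).1 = S₁.phiE et.1 := by
    intro et
    have h := T.htlab (Sum.inr et)
    exact C.iLbl_inj h
  have keyE2 : ∀ et : (SM1 C S₁).ET,
      S₂.dom (T.eET et).1 = (T.eNT ⟨S₁.dom et.1, et.2.1⟩).1 ∧
      S₂.rng (T.eET et).1 = (T.eNT ⟨S₁.rng et.1, et.2.2⟩).1 := by
    intro et
    have h := T.htends et
    constructor
    · exact congrArg (fun x => x.1.1) h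
    · exact congrArg (fun x => x.2.1) h
  have hF : ∀ rc : S₁.NS, ∃ rc₂ : S₂.NS, S₂.phiN rc₂ = S₁.phiN rc ∧
      ∀ h : S₁.phiN rc ∉ C.IDT, rc₂ = (T.eNT ⟨rc, h⟩).1 := by
    intro rc
    by_cases h : S₁.phiN rc ∉ C.IDT
    · exact ⟨(T.eNT ⟨rc, h⟩).1, keyN _, fun _ => rfl⟩
    · have hmem := not_not.mp h
      obtain ⟨pc, hpc⟩ := hr₁ rc hmem
      refine ⟨S₂.rng (pcmap ⟨pc, hd₁ pc, by rw [hpc]; exact hmem⟩).1, ?_,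
        fun h' => absurd hmem h'⟩
      rw [(key _).2]
      show S₁.phiN (S₁.rng pc) = S₁.phiN rc
      rw [hpc]
  set F := fun rc => (hF rc).choose with hFdef
  refine ⟨F, fun pc => if h : S₁.phiN (S₁.rng pc) ∈ C.IDT
      then (pcmap ⟨pc, hd₁ pc, h⟩).1 else (T.eET ⟨pc, hd₁ pc, h⟩).1, ?_, ?_, ?_, ?_⟩
  · exact fun rc => ((hF rc).choose_spec).1
  · intro pc
    dsimp only
    by_cases h : S₁.phiN (S₁.rng pc) ∈ C.IDT
    · rw [dif_pos h]; exact (key _).1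
    · rw [dif_neg h]; exact keyE1 _
  · intro pc
    dsimp only
    by_cases h : S₁.phiN (S₁.rng pc) ∈ C.IDT
    · rw [dif_pos h, key2]
      exact (((hF (S₁.dom pc)).choose_spec).2 (hd₁ pc)).symm
    · rw [dif_neg h]; refine (keyE2 ⟨pc, hd₁ pc, h⟩).1.trans ?_
      exact (((hF (S₁.dom pc)).choose_spec).2 (hd₁ pc)).symm
  · intro pc
    dsimp only
    by_cases h : S₁.phiN (S₁.rng pc) ∈ C.IDT
    · rw [dif_pos h]
      apply injN₂
      rw [(key _).2]
      exact (((hF (S₁.rng pc)).choose_spec).1).symm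
    · rw [dif_neg h]; refine (keyE2 ⟨pc, hd₁ pc, h⟩).2.trans ?_
      exact (((hF (S₁.rng pc)).choose_spec).2 h).symm

end Aux

/-- One direction of the graph part of injectivity of DM₁. -/
lemma im1_half (C : Ctx) (S₁ S₂ : RDFSchema C) (G₁ G₂ : RDFGraph C)
    (h₁ : DBGood C S₁ G₁) (h₂ : DBGood C S₂ G₂)
    (P : PGIso C (IM1 C G₁) (IM1 C G₂)) :
    ∃ (FN : G₁.NI → G₂.NI) (FL : G₁.NL → G₂.NL) (FO : G₁.EO → G₂.EO) (FD : G₁.ED → G₂.ED),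
      FN = P.eN ∧ FO = P.eE ∧
      (∀ e, P.eP (Sum.inr e) = Sum.inr (FD e)) ∧
      (∀ r, G₂.aI (FN r) = G₁.aI r) ∧
      (∀ l, G₂.aL (FL l) = G₁.aL l) ∧
      (∀ e, G₂.bO (FO e) = (FN (G₁.bO e).1, FN (G₁.bO e).2)) ∧
      (∀ e, G₂.bD (FD e) = (FN (G₁.bD e).1, FL (G₁.bD e).2)) ∧
      (∀ r, G₂.dI (FN r) = G₁.dI r) ∧
      (∀ l, G₂.dL (FL l) = G₁.dL l) ∧
      (∀ e, G₂.dO (FO e) = G₁.dO e) ∧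
      (∀ e, G₂.dD (FD e) = G₁.dD e) := by
  classical
  have iDD₁ : ∀ dp : G₁.ED, C.iLbl (G₁.dD dp) ≠ C.iriLbl := by
    intro dp
    obtain ⟨pc, hpc, -⟩ := h₁.2.2.1.2.2.2 dp
    rw [hpc]
    exact h₁.2.2.2.1 (Sum.inr pc)
  have iDD₂ : ∀ dp : G₂.ED, C.iLbl (G₂.dD dp) ≠ C.iriLbl := by
    intro dp
    obtain ⟨pc, hpc, -⟩ := h₂.2.2.1.2.2.2 dp
    rw [hpc]
    exact h₂.2.2.2.1 (Sum.inr pc)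
  -- eP maps inl to inl (onto the image of eN) and inr to inr
  have hinl : ∀ r : G₁.NI, P.eP (Sum.inl r) = Sum.inl (P.eN r) := by
    intro r
    have hpv := P.hpv (Sum.inl r)
    cases hq : P.eP (Sum.inl r) with
    | inr dp₂ =>
        rw [hq] at hpv
        exact absurd (by simpa [IM1] using congrArg Prod.fst hpv) (iDD₂ dp₂)
    | inl r₂ =>
        have hm : (Sum.inl r : (IM1 C G₁).P) ∈ (IM1 C G₁).props (Sum.inl r) := rfl
        have h := (P.hprops (Sum.inl r) (Sum.inl r)).mpr hm
        rw [hq] at h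
        exact congrArg Sum.inl (show r₂ = P.eN r from h)
  have hinr : ∀ dp : G₁.ED, ∃ dp₂ : G₂.ED,
      P.eP (Sum.inr dp) = Sum.inr dp₂ := by
    intro dp
    have hpv := P.hpv (Sum.inr dp)
    cases hq : P.eP (Sum.inr dp) with
    | inl r₂ =>
        rw [hq] at hpv
        exact absurd (by simpa [IM1] using (congrArg Prod.fst hpv).symm) (iDD₁ dp)
    | inr dp₂ => exact ⟨dp₂, rfl⟩
  set FD := fun dp => (hinr dp).choose with hFD
  have keyD : ∀ dp, C.iLbl (G₂.dD (FD dp)) = C.iLbl (G₁.dD dp) ∧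
      C.lVal (G₂.aL (G₂.bD (FD dp)).2) = C.lVal (G₁.aL (G₁.bD dp).2) := by
    intro dp
    have hpv := P.hpv (Sum.inr dp)
    rw [(hinr dp).choose_spec] at hpv
    simp only [IM1, Sum.elim_inr, Prod.mk.injEq] at hpv
    exact hpv
  have keyDdom : ∀ dp, (G₂.bD (FD dp)).1 = P.eN (G₁.bD dp).1 := by
    intro dp
    have hm : (Sum.inr dp : (IM1 C G₁).P) ∈
        (IM1 C G₁).props (Sum.inl (G₁.bD dp).1) := rfl
    have h := (P.hprops (Sum.inl (G₁.bD dp).1) (Sum.inr dp)).mpr hm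
    rw [(hinr dp).choose_spec] at h
    exact h
  have hFL : ∀ l : G₁.NL, ∃ l₂ : G₂.NL, G₂.aL l₂ = G₁.aL l := by
    intro l
    obtain ⟨dp, hdp⟩ := h₁.2.2.2.2.2.2.1 l
    exact ⟨(G₂.bD (FD dp)).2, by
      have := C.lVal_inj (keyD dp).2
      rw [this, hdp]⟩
  set FL := fun l => (hFL l).choose with hFLdef
  have haL : ∀ l, G₂.aL (FL l) = G₁.aL l := fun l => (hFL l).choose_spec
  refine ⟨P.eN, FL, P.eE, FD, rfl, rfl, fun e => (hinr e).choose_spec, ?_, haL,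
    ?_, ?_, ?_, ?_, ?_, ?_⟩
  · -- aI
    intro r
    have hpv := P.hpv (Sum.inl r)
    rw [hinl r] at hpv
    simp only [IM1, Sum.elim_inl, Prod.mk.injEq] at hpv
    exact C.iVal_inj hpv.2
  · -- bO
    exact P.hends
  · -- bD
    intro e
    have h2 : G₂.aL (G₂.bD (FD e)).2 = G₂.aL (FL (G₁.bD e).2) := by
      rw [haL, C.lVal_inj (keyD e).2]
    have haLinj : Function.Injective G₂.aL := h₂.2.1.2.2.2.2.2
    exact Prod.ext (keyDdom e) (haLinj h2)
  · -- dI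
    intro r
    have h := P.hlab (Sum.inl r)
    exact C.iLbl_inj h
  · -- dL
    intro l
    obtain ⟨hm₁, hty₁⟩ := h₁.2.2.2.2.2.2.2
    obtain ⟨hm₂, hty₂⟩ := h₂.2.2.2.2.2.2.2
    have : C.f ⟨G₂.dL (FL l), hm₂ (FL l)⟩ = C.f ⟨G₁.dL l, hm₁ l⟩ := by
      rw [← hty₂, ← hty₁, haL]
    exact congrArg Subtype.val (C.f_bij.injective this)
  · -- dO
    intro e
    have h := P.hlab (Sum.inr e)
    exact C.iLbl_inj h
  · -- dD
    exact fun e => C.iLbl_inj (keyD e).1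


/-- The database mapping DM₁ is injective up to isomorphism: if
D₁ = (S₁, G₁) and D₂ = (S₂, G₂) are RDF databases (each satisfying the side
conditions) such that DM₁(D₁) is isomorphic to DM₁(D₂) as property graph
databases, then D₁ is isomorphic to D₂ as RDF databases. -/
theorem dm1_injective_up_to_iso (C : Ctx)
    (S₁ S₂ : RDFSchema C) (G₁ G₂ : RDFGraph C)
    (h₁ : DBGood C S₁ G₁) (h₂ : DBGood C S₂ G₂)
    (hs : Nonempty (PGSchemaIso C (SM1 C S₁) (SM1 C S₂)))
    (hg : Nonempty (PGIso C (IM1 C G₁) (IM1 C G₂))) :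
    Nonempty (RDFSchemaIso C S₁ S₂) ∧ Nonempty (RDFIso C G₁ G₂) := by
  obtain ⟨T⟩ := hs
  obtain ⟨P⟩ := hg
  have injN₁ : Function.Injective S₁.phiN := by
    intro a b hab
    exact Sum.inl.inj (h₁.1.2.2.1 (show Sum.elim S₁.phiN S₁.phiE (Sum.inl a) =
      Sum.elim S₁.phiN S₁.phiE (Sum.inl b) from hab))
  have injN₂ : Function.Injective S₂.phiN := by
    intro a b hab
    exact Sum.inl.inj (h₂.1.2.2.1 (show Sum.elim S₂.phiN S₂.phiE (Sum.inl a) =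
      Sum.elim S₂.phiN S₂.phiE (Sum.inl b) from hab))
  have injE₁ : Function.Injective S₁.phiE := by
    intro a b hab
    exact Sum.inr.inj (h₁.1.2.2.1 (show Sum.elim S₁.phiN S₁.phiE (Sum.inr a) =
      Sum.elim S₁.phiN S₁.phiE (Sum.inr b) from hab))
  have injE₂ : Function.Injective S₂.phiE := by
    intro a b hab
    exact Sum.inr.inj (h₂.1.2.2.1 (show Sum.elim S₂.phiN S₂.phiE (Sum.inr a) =
      Sum.elim S₂.phiN S₂.phiE (Sum.inr b) from hab))
  obtain ⟨F, E, hFN, hFE, hFdom, hFrng⟩ :=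
    sm1_half C S₁ S₂ injN₂ h₁.2.2.2.1 h₂.2.2.2.1 h₁.2.2.2.2.1 h₁.2.2.2.2.2.1 T
  obtain ⟨F', E', hFN', hFE', hFdom', hFrng'⟩ :=
    sm1_half C S₂ S₁ injN₁ h₂.2.2.2.1 h₁.2.2.2.1 h₂.2.2.2.2.1 h₂.2.2.2.2.2.1 T.symm
  obtain ⟨FN, FLf, FO, FDf, hFNeq, hFOeq, hFDspec, haI, haL, hbO, hbD, hdI, hdL, hdO, hdD⟩ :=
    im1_half C S₁ S₂ G₁ G₂ h₁ h₂ P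
  obtain ⟨FN', FL', FO', FD', hFNeq', hFOeq', hFDspec', haI', haL', hbO', hbD',
      hdI', hdL', hdO', hdD'⟩ := im1_half C S₂ S₁ G₂ G₁ h₂ h₁ P.symm
  subst hFNeq hFOeq
  have injaL₁ : Function.Injective G₁.aL := h₁.2.1.2.2.2.2.2
  have injaL₂ : Function.Injective G₂.aL := h₂.2.1.2.2.2.2.2
  have hED : ∀ e, FD' (FDf e) = e := by
    intro e
    have h3 : P.eP.symm (Sum.inr (FDf e)) = Sum.inr (FD' (FDf e)) := hFDspec' (FDf e)
    rw [← hFDspec e] at h3; replace h3 := (P.eP.symm_apply_apply _).symm.trans h3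
    exact (Sum.inr.inj h3).symm
  have hED2 : ∀ e₂, FDf (FD' e₂) = e₂ := by
    intro e₂
    have h3 : P.eP.symm (Sum.inr e₂) = Sum.inr (FD' e₂) := hFDspec' e₂
    have h4 := hFDspec (FD' e₂)
    rw [← h3] at h4; replace h4 := (P.eP.apply_symm_apply _).symm.trans h4
    exact (Sum.inr.inj h4).symm
  constructor
  · exact ⟨⟨⟨F, F', fun rc => injN₁ (by rw [hFN', hFN]),
      fun rc => injN₂ (by rw [hFN, hFN'])⟩,
      ⟨E, E', fun pc => injE₁ (by rw [hFE', hFE]),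
      fun pc => injE₂ (by rw [hFE, hFE'])⟩,
      hFN, hFE, hFdom, hFrng⟩⟩
  · exact ⟨⟨P.eN,
      ⟨FLf, FL', fun l => injaL₁ (by rw [haL', haL]),
        fun l => injaL₂ (by rw [haL, haL'])⟩,
      P.eE,
      ⟨FDf, FD', hED, hED2⟩,
      haI, haL, hbO, hbD, hdI, hdL, hdO, hdD⟩⟩
end
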